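/- Fix an integer n ≥ 1. Let P and Q be real polynomials of degree exactly 2n that are strictly positive at every point of ℝ, and let θ : ℝ → ℝ be Lebesgue-measurable with θ(x) > 0 for all x and ∫ (1+|x|^{2n}) θ(x) dx < ∞. Let D be the set of pairs (u, v) ∈ V_{2n−1} × V_{2n−1} such that ∫_ℝ x^k ( u(x)/P(x) − v(x)/Q(x) ) θ(x) dx = 0 for every k = 0, 1, …, 2n and ∫_ℝ x^k ( u(x)Q(x) − v(x)P(x) ) θ(x)/Q(x)² dx = 0 for every k = 0, 1, …, 2n. Then D is an ℝ-linear subspace of V_{2n−1} × V_{2n−1} whose dimension equals the degree of the greatest common divisor of the polynomials P and Q. -/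

import Mathlib

open MeasureTheory Polynomial Real

open Filter

private lemma bdd_of_tendsto {f : ℝ → ℝ} (hf : Continuous f) {l₁ l₂ : ℝ}
    (h1 : Tendsto f atTop (nhds l₁)) (h2 : Tendsto f atBot (nhds l₂)) :
    ∃ C : ℝ, ∀ x, |f x| ≤ C := by
  have h1' : Tendsto (fun x => |f x|) atTop (nhds |l₁|) := h1.abs
  have h2' : Tendsto (fun x => |f x|) atBot (nhds |l₂|) := h2.abs
  have e1 : ∀ᶠ x in atTop, |f x| < |l₁| + 1 :=
    Filter.Tendsto.eventually_lt_const (by linarith [abs_nonneg l₁]) h1'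
  have e2 : ∀ᶠ x in atBot, |f x| < |l₂| + 1 :=
    Filter.Tendsto.eventually_lt_const (by linarith [abs_nonneg l₂]) h2'
  obtain ⟨A, hA⟩ := eventually_atTop.mp e1
  obtain ⟨B, hB⟩ := eventually_atBot.mp e2
  obtain ⟨C₀, hC₀⟩ := (isCompact_Icc (a := B) (b := A)).exists_bound_of_continuousOn
    hf.continuousOn
  refine ⟨max (|l₁| + 1) (max (|l₂| + 1) C₀), fun x => ?_⟩
  rcases le_total A x with hx | hx
  · exact le_trans (hA x hx).le (le_max_left _ _)
  rcases le_total x B with hx' | hx'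
  · exact le_trans (hB x hx').le (le_trans (le_max_left _ _) (le_max_right _ _))
  · have := hC₀ x ⟨hx', hx⟩
    rw [Real.norm_eq_abs] at this
    exact le_trans this (le_trans (le_max_right _ _) (le_max_right _ _))

private lemma tendsto_atTop_aux (N M : Polynomial ℝ) (h : N.degree ≤ M.degree) :
    ∃ l, Tendsto (fun x => N.eval x / M.eval x) atTop (nhds l) := by
  rcases h.lt_or_eq with hlt | heq
  · exact ⟨0, by simpa using Polynomial.div_tendsto_zero_of_degree_lt N M hlt⟩
  · exact ⟨_, by simpa using Polynomial.div_tendsto_leadingCoeff_div_of_degree_eq N M heq⟩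

private lemma comp_negX_invol (p : Polynomial ℝ) : (p.comp (-X)).comp (-X) = p := by
  rw [Polynomial.comp_assoc]
  simp

private lemma tendsto_atBot_aux (N M : Polynomial ℝ) (hM : M ≠ 0) (h : N.degree ≤ M.degree) :
    ∃ l, Tendsto (fun x => N.eval x / M.eval x) atBot (nhds l) := by
  by_cases hN : N = 0
  · exact ⟨0, by simp [hN, tendsto_const_nhds]⟩
  set N' := N.comp (-X) with hN'def
  set M' := M.comp (-X) with hM'def
  have hN0 : N' ≠ 0 := fun h0 => hN (by rw [← comp_negX_invol N, ← hN'def, h0, Polynomial.zero_comp])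
  have hM0 : M' ≠ 0 := fun h0 => hM (by rw [← comp_negX_invol M, ← hM'def, h0, Polynomial.zero_comp])
  have hdeg : N'.degree ≤ M'.degree := by
    rw [Polynomial.degree_eq_natDegree hN0, Polynomial.degree_eq_natDegree hM0,
      Nat.cast_le, hN'def, hM'def, Polynomial.natDegree_comp, Polynomial.natDegree_comp]
    have : (-X : Polynomial ℝ).natDegree = 1 := by
      rw [Polynomial.natDegree_neg, Polynomial.natDegree_X]
    rw [this, mul_one, mul_one]
    exact Polynomial.natDegree_le_natDegree h
  obtain ⟨l, hl⟩ := tendsto_atTop_aux N' M' hdeg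
  refine ⟨l, ?_⟩
  have key := hl.comp tendsto_neg_atBot_atTop
  refine key.congr fun x => ?_
  simp [hN'def, hM'def, Function.comp, Polynomial.eval_comp]

private lemma poly_div_bdd (N M : Polynomial ℝ) (hM : ∀ x, 0 < M.eval x)
    (h : N.natDegree ≤ M.natDegree) : ∃ C : ℝ, ∀ x, |N.eval x / M.eval x| ≤ C := by
  have hM0 : M ≠ 0 := fun h0 => by simpa [h0] using hM 0
  by_cases hN : N = 0
  · exact ⟨0, fun x => by simp [hN]⟩
  have hdeg : N.degree ≤ M.degree := by
    rw [Polynomial.degree_eq_natDegree hN, Polynomial.degree_eq_natDegree hM0]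
    exact_mod_cast h
  obtain ⟨l₁, h1⟩ := tendsto_atTop_aux N M hdeg
  obtain ⟨l₂, h2⟩ := tendsto_atBot_aux N M hM0 hdeg
  exact bdd_of_tendsto ((N.continuous_aeval).div (M.continuous_aeval)
    (fun x => (hM x).ne')) h1 h2

private lemma integrable_ratio (n : ℕ) (hn : 1 ≤ n) (θ : ℝ → ℝ) (hθmeas : Measurable θ)
    (hθpos : ∀ x, 0 < θ x)
    (hθint : Integrable (fun x : ℝ => (1 + |x| ^ (2 * n)) * θ x))
    (N D : Polynomial ℝ) (hD : ∀ x, 0 < D.eval x)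
    (hdeg : N.natDegree ≤ D.natDegree + 2 * n) :
    Integrable (fun x => N.eval x / D.eval x * θ x) := by
  have hD0 : D ≠ 0 := fun h0 => by simpa [h0] using hD 0
  set E : Polynomial ℝ := X ^ (2 * n) + Polynomial.C 1 with hEdef
  have hEdeg : E.natDegree = 2 * n := Polynomial.natDegree_X_pow_add_C
  have hEeval : ∀ x : ℝ, E.eval x = 1 + |x| ^ (2 * n) := by
    intro x
    rw [hEdef]
    simp only [Polynomial.eval_add, Polynomial.eval_pow, Polynomial.eval_X, Polynomial.eval_C]
    rw [pow_mul, pow_mul, sq_abs, add_comm]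
  have hEpos : ∀ x : ℝ, 0 < E.eval x := fun x => by
    rw [hEeval]; positivity
  have hE0 : E ≠ 0 := fun h0 => by simpa [h0] using hEpos 0
  have hMpos : ∀ x, 0 < (E * D).eval x := fun x => by
    rw [Polynomial.eval_mul]; exact mul_pos (hEpos x) (hD x)
  obtain ⟨C, hC⟩ := poly_div_bdd N (E * D) hMpos
    (by rw [Polynomial.natDegree_mul hE0 hD0, hEdeg]; omega)
  have hCnn : 0 ≤ C := le_trans (abs_nonneg _) (hC 0)
  apply Integrable.mono' (hθint.const_mul C)
  · exact (((N.continuous_aeval).div (D.continuous_aeval)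
      (fun x => (hD x).ne')).measurable.mul hθmeas).aestronglyMeasurable
  · filter_upwards with x
    have key : N.eval x / D.eval x = N.eval x / (E * D).eval x * E.eval x := by
      rw [Polynomial.eval_mul]
      field_simp
      rw [mul_comm (Polynomial.eval x D) (Polynomial.eval x E),
        mul_comm (Polynomial.eval x N) (Polynomial.eval x E), mul_div_mul_left _ _ (hEpos x).ne']
    rw [Real.norm_eq_abs, abs_mul, key, abs_mul, abs_of_pos (hθpos x),
      abs_of_pos (hEpos x), hEeval]
    calc |N.eval x / (E * D).eval x| * (1 + |x| ^ (2 * n)) * θ x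
        ≤ C * (1 + |x| ^ (2 * n)) * θ x := by
          apply mul_le_mul_of_nonneg_right _ (hθpos x).le
          apply mul_le_mul_of_nonneg_right (hC x) (by positivity)
      _ = C * ((1 + |x| ^ (2 * n)) * θ x) := by ring

private lemma combo_zero (n : ℕ) (hn : 1 ≤ n) (θ : ℝ → ℝ) (hθmeas : Measurable θ)
    (hθpos : ∀ x, 0 < θ x)
    (hθint : Integrable (fun x : ℝ => (1 + |x| ^ (2 * n)) * θ x))
    (w Dp : Polynomial ℝ) (hDp : ∀ x, 0 < Dp.eval x) (hw : w.natDegree ≤ Dp.natDegree)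
    (hvan : ∀ k ≤ 2 * n, ∫ x : ℝ, x ^ k * w.eval x / Dp.eval x * θ x = 0)
    (r : Polynomial ℝ) (hr : r.natDegree < 2 * n + 1) :
    ∫ x : ℝ, r.eval x * w.eval x / Dp.eval x * θ x = 0 := by
  have hterm : ∀ k, k ≤ 2 * n →
      Integrable (fun x : ℝ => x ^ k * w.eval x / Dp.eval x * θ x) := by
    intro k hk
    have h1 : (fun x : ℝ => x ^ k * w.eval x / Dp.eval x * θ x)
        = fun x : ℝ => (X ^ k * w).eval x / Dp.eval x * θ x := by
      funext x; simp [Polynomial.eval_mul, Polynomial.eval_pow]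
    rw [h1]
    apply integrable_ratio n hn θ hθmeas hθpos hθint _ _ hDp
    calc (X ^ k * w).natDegree ≤ (X ^ k : Polynomial ℝ).natDegree + w.natDegree :=
          Polynomial.natDegree_mul_le
      _ ≤ Dp.natDegree + 2 * n := by
          rw [Polynomial.natDegree_X_pow]; omega
  have hexp : (fun x : ℝ => r.eval x * w.eval x / Dp.eval x * θ x)
      = fun x : ℝ => ∑ k ∈ Finset.range (2 * n + 1),
          r.coeff k * (x ^ k * w.eval x / Dp.eval x * θ x) := by
    funext x
    have : r.eval x = ∑ k ∈ Finset.range (2 * n + 1), r.coeff k * x ^ k := by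
      conv_lhs => rw [r.as_sum_range' (2 * n + 1) hr]
      simp [Polynomial.eval_finset_sum, Polynomial.eval_monomial]
    rw [this, Finset.sum_mul, Finset.sum_div, Finset.sum_mul]
    exact Finset.sum_congr rfl fun k _ => by ring
  rw [hexp, MeasureTheory.integral_finset_sum]
  · apply Finset.sum_eq_zero
    intro k hk
    have hk' : k ≤ 2 * n := Nat.lt_succ_iff.mp (Finset.mem_range.mp hk)
    rw [MeasureTheory.integral_const_mul, hvan k hk', mul_zero]
  · intro k hk
    have hk' : k ≤ 2 * n := Nat.lt_succ_iff.mp (Finset.mem_range.mp hk)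
    exact (hterm k hk').const_mul _

private lemma mul_mem_degreeLT_aux (m d : ℕ) (t a : Polynomial ℝ) (ha : a ≠ 0)
    (hsum : d + a.natDegree = m) (ht : t ∈ Polynomial.degreeLT ℝ d) :
    t * a ∈ Polynomial.degreeLT ℝ m := by
  rw [Polynomial.mem_degreeLT] at ht ⊢
  by_cases ht0 : t = 0
  · rw [ht0, zero_mul, Polynomial.degree_zero]
    exact WithBot.bot_lt_coe m
  have htd : t.natDegree < d := by
    rw [Polynomial.degree_eq_natDegree ht0] at ht
    exact_mod_cast ht
  rw [Polynomial.degree_eq_natDegree (mul_ne_zero ht0 ha), Polynomial.natDegree_mul ht0 ha]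
  exact_mod_cast (by omega : t.natDegree + a.natDegree < m)

private noncomputable def psiMap (m d : ℕ) (p₁ q₁ : Polynomial ℝ)
    (h1 : ∀ t : Polynomial ℝ, t ∈ Polynomial.degreeLT ℝ d →
      t * p₁ ∈ Polynomial.degreeLT ℝ m)
    (h2 : ∀ t : Polynomial ℝ, t ∈ Polynomial.degreeLT ℝ d →
      t * q₁ ∈ Polynomial.degreeLT ℝ m) :
    Polynomial.degreeLT ℝ d →ₗ[ℝ]
      (Polynomial.degreeLT ℝ m × Polynomial.degreeLT ℝ m) where
  toFun t := (⟨(t : Polynomial ℝ) * p₁, h1 _ t.2⟩, ⟨(t : Polynomial ℝ) * q₁, h2 _ t.2⟩)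
  map_add' s t := by
    refine Prod.ext (Subtype.ext ?_) (Subtype.ext ?_) <;> simp [add_mul]
  map_smul' c t := by
    refine Prod.ext (Subtype.ext ?_) (Subtype.ext ?_) <;> simp [smul_mul_assoc]

/-- The intersection `D` of the kernels of the Jacobians of the generalized logarithmic
moment map and of the power moment map at a positive pair `(P,Q)` of degree-`2n`
polynomials is a linear subspace of `V_{2n−1} × V_{2n−1}` whose dimension equals the
degree of the greatest common divisor of `P` and `Q`. -/
theorem dimension_of_jacobian_kernel_intersection
    (n : ℕ) (hn : 1 ≤ n)
    (P Q : Polynomial ℝ)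
    (hPdeg : P.natDegree = 2 * n) (hQdeg : Q.natDegree = 2 * n)
    (hPpos : ∀ x : ℝ, 0 < P.eval x) (hQpos : ∀ x : ℝ, 0 < Q.eval x)
    (θ : ℝ → ℝ) (hθmeas : Measurable θ) (hθpos : ∀ x, 0 < θ x)
    (hθint : Integrable (fun x : ℝ => (1 + |x| ^ (2 * n)) * θ x)) :
    ∃ D : Submodule ℝ ((Polynomial.degreeLT ℝ (2 * n)) × (Polynomial.degreeLT ℝ (2 * n))),
      (∀ p : (Polynomial.degreeLT ℝ (2 * n)) × (Polynomial.degreeLT ℝ (2 * n)),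
        p ∈ D ↔
          ((∀ k ≤ 2 * n, ∫ x : ℝ, x ^ k *
              ((p.1 : Polynomial ℝ).eval x / P.eval x
                - (p.2 : Polynomial ℝ).eval x / Q.eval x) * θ x = 0) ∧
           (∀ k ≤ 2 * n, ∫ x : ℝ, x ^ k *
              ((p.1 : Polynomial ℝ).eval x * Q.eval x
                - (p.2 : Polynomial ℝ).eval x * P.eval x) * θ x / (Q.eval x) ^ 2 = 0))) ∧
      Module.finrank ℝ D = (EuclideanDomain.gcd P Q).natDegree := by
  classical
  have hP0 : P ≠ 0 := fun h0 => by simpa [h0] using hPpos 0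
  have hQ0 : Q ≠ 0 := fun h0 => by simpa [h0] using hQpos 0
  set g := EuclideanDomain.gcd P Q with hgdef
  obtain ⟨p₁, hp₁⟩ : g ∣ P := EuclideanDomain.gcd_dvd_left P Q
  obtain ⟨q₁, hq₁⟩ : g ∣ Q := EuclideanDomain.gcd_dvd_right P Q
  have hg0 : g ≠ 0 := fun h0 => hP0 (by rw [hp₁, h0, zero_mul])
  have hp₁0 : p₁ ≠ 0 := fun h0 => hP0 (by rw [hp₁, h0, mul_zero])
  have hq₁0 : q₁ ≠ 0 := fun h0 => hQ0 (by rw [hq₁, h0, mul_zero])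
  have hdegP : g.natDegree + p₁.natDegree = 2 * n := by
    rw [← hPdeg, hp₁, Polynomial.natDegree_mul hg0 hp₁0]
  have hdegQ : g.natDegree + q₁.natDegree = 2 * n := by
    rw [← hQdeg, hq₁, Polynomial.natDegree_mul hg0 hq₁0]
  have hcop : IsCoprime p₁ q₁ := by
    refine ⟨EuclideanDomain.gcdA P Q, EuclideanDomain.gcdB P Q, ?_⟩
    apply mul_left_cancel₀ hg0
    rw [mul_one]
    have hbez := EuclideanDomain.gcd_eq_gcd_ab P Q
    rw [← hgdef] at hbez
    calc g * (EuclideanDomain.gcdA P Q * p₁ + EuclideanDomain.gcdB P Q * q₁)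
        = P * EuclideanDomain.gcdA P Q + Q * EuclideanDomain.gcdB P Q := by
          rw [hp₁, hq₁]; ring
      _ = g := hbez.symm
  have hmem1 : ∀ t : Polynomial ℝ, t ∈ Polynomial.degreeLT ℝ g.natDegree →
      t * p₁ ∈ Polynomial.degreeLT ℝ (2 * n) :=
    fun t ht => mul_mem_degreeLT_aux _ _ t p₁ hp₁0 hdegP ht
  have hmem2 : ∀ t : Polynomial ℝ, t ∈ Polynomial.degreeLT ℝ g.natDegree →
      t * q₁ ∈ Polynomial.degreeLT ℝ (2 * n) :=
    fun t ht => mul_mem_degreeLT_aux _ _ t q₁ hq₁0 hdegQ ht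
  set Ψ := psiMap (2 * n) g.natDegree p₁ q₁ hmem1 hmem2 with hΨ
  refine ⟨LinearMap.range Ψ, ?_, ?_⟩
  · intro p
    obtain ⟨⟨u, hu⟩, ⟨v, hv⟩⟩ := p
    constructor
    · rintro ⟨t, ht⟩
      have hu' : (t : Polynomial ℝ) * p₁ = u := congrArg (fun z =>
        ((z.1 : Polynomial.degreeLT ℝ (2 * n)) : Polynomial ℝ)) ht
      have hv' : (t : Polynomial ℝ) * q₁ = v := congrArg (fun z =>
        ((z.2 : Polynomial.degreeLT ℝ (2 * n)) : Polynomial ℝ)) ht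
      constructor
      · intro k hk
        show ∫ x : ℝ, x ^ k * (u.eval x / P.eval x - v.eval x / Q.eval x) * θ x = 0
        have hzero : (fun x : ℝ => x ^ k * (u.eval x / P.eval x - v.eval x / Q.eval x) * θ x)
            = fun _ => (0 : ℝ) := by
          funext x
          have : u.eval x / P.eval x = v.eval x / Q.eval x := by
            rw [div_eq_div_iff (hPpos x).ne' (hQpos x).ne', ← hu', ← hv', hp₁, hq₁]
            simp only [Polynomial.eval_mul]
            ring
          rw [this, sub_self, mul_zero, zero_mul]
        rw [hzero, integral_zero]
      · intro k hk
        show ∫ x : ℝ, x ^ k * (u.eval x * Q.eval x - v.eval x * P.eval x) * θ x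
            / (Q.eval x) ^ 2 = 0
        have hzero : (fun x : ℝ => x ^ k * (u.eval x * Q.eval x - v.eval x * P.eval x) * θ x
            / (Q.eval x) ^ 2) = fun _ => (0 : ℝ) := by
          funext x
          have : u.eval x * Q.eval x - v.eval x * P.eval x = 0 := by
            rw [← hu', ← hv', hp₁, hq₁]
            simp only [Polynomial.eval_mul]
            ring
          rw [this, mul_zero, zero_mul, zero_div]
        rw [hzero, integral_zero]
    · rintro ⟨hc1, hc2⟩
      set w : Polynomial ℝ := u * Q - v * P with hwdef
      have hudeg : u.natDegree ≤ 2 * n :=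
        Polynomial.natDegree_le_iff_degree_le.mpr (le_of_lt (Polynomial.mem_degreeLT.mp hu))
      have hvdeg : v.natDegree ≤ 2 * n :=
        Polynomial.natDegree_le_iff_degree_le.mpr (le_of_lt (Polynomial.mem_degreeLT.mp hv))
      have hwdeg : w.natDegree ≤ 4 * n := by
        refine le_trans (Polynomial.natDegree_sub_le _ _) (max_le ?_ ?_)
        · exact le_trans Polynomial.natDegree_mul_le (by omega)
        · exact le_trans Polynomial.natDegree_mul_le (by omega)
      have hPQpos : ∀ x : ℝ, 0 < (P * Q).eval x := fun x => by
        rw [Polynomial.eval_mul]; exact mul_pos (hPpos x) (hQpos x)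
      have hPQdeg : (P * Q).natDegree = 4 * n := by
        rw [Polynomial.natDegree_mul hP0 hQ0]; omega
      have hQ2pos : ∀ x : ℝ, 0 < (Q ^ 2).eval x := fun x => by
        rw [Polynomial.eval_pow]; exact pow_pos (hQpos x) 2
      have hQ2deg : (Q ^ 2).natDegree = 4 * n := by
        rw [Polynomial.natDegree_pow]; omega
      have hPQ2pos : ∀ x : ℝ, 0 < (P * Q ^ 2).eval x := fun x => by
        rw [Polynomial.eval_mul]; exact mul_pos (hPpos x) (hQ2pos x)
      have hPQ2deg : (P * Q ^ 2).natDegree = 6 * n := by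
        rw [Polynomial.natDegree_mul hP0 (pow_ne_zero 2 hQ0), Polynomial.natDegree_pow]; omega
      have hvan1 : ∀ k, k ≤ 2 * n →
          ∫ x : ℝ, x ^ k * w.eval x / (P * Q).eval x * θ x = 0 := by
        intro k hk
        have key : (fun x : ℝ => x ^ k * w.eval x / (P * Q).eval x * θ x)
            = fun x : ℝ => x ^ k * (u.eval x / P.eval x - v.eval x / Q.eval x) * θ x := by
          funext x
          rw [hwdef]
          simp only [Polynomial.eval_sub, Polynomial.eval_mul]
          have hPx := (hPpos x).ne'
          have hQx := (hQpos x).ne'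
          rw [div_sub_div _ _ hPx hQx]
          ring
        rw [key]
        exact hc1 k hk
      have hvan2 : ∀ k, k ≤ 2 * n →
          ∫ x : ℝ, x ^ k * w.eval x / (Q ^ 2).eval x * θ x = 0 := by
        intro k hk
        have key : (fun x : ℝ => x ^ k * w.eval x / (Q ^ 2).eval x * θ x)
            = fun x : ℝ => x ^ k * (u.eval x * Q.eval x - v.eval x * P.eval x) * θ x
                / (Q.eval x) ^ 2 := by
          funext x
          rw [hwdef]
          simp only [Polynomial.eval_sub, Polynomial.eval_mul, Polynomial.eval_pow]
          ring
        rw [key]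
        exact hc2 k hk
      have A := combo_zero n hn θ hθmeas hθpos hθint w (P * Q) hPQpos (by omega)
        hvan1 u (by omega)
      have B := combo_zero n hn θ hθmeas hθpos hθint w (Q ^ 2) hQ2pos (by omega)
        hvan2 v (by omega)
      have hint1 : Integrable (fun x : ℝ => u.eval x * w.eval x / (P * Q).eval x * θ x) := by
        have heq : (fun x : ℝ => u.eval x * w.eval x / (P * Q).eval x * θ x)
            = fun x : ℝ => (u * w).eval x / (P * Q).eval x * θ x := by
          funext x; simp [Polynomial.eval_mul]
        rw [heq]
        refine integrable_ratio n hn θ hθmeas hθpos hθint _ _ hPQpos ?_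
        have := Polynomial.natDegree_mul_le (p := u) (q := w)
        omega
      have hint2 : Integrable (fun x : ℝ => v.eval x * w.eval x / (Q ^ 2).eval x * θ x) := by
        have heq : (fun x : ℝ => v.eval x * w.eval x / (Q ^ 2).eval x * θ x)
            = fun x : ℝ => (v * w).eval x / (Q ^ 2).eval x * θ x := by
          funext x; simp [Polynomial.eval_mul]
        rw [heq]
        refine integrable_ratio n hn θ hθmeas hθpos hθint _ _ hQ2pos ?_
        have := Polynomial.natDegree_mul_le (p := v) (q := w)
        omega
      have key3 : (fun x : ℝ => (w * w).eval x / (P * Q ^ 2).eval x * θ x)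
          = fun x : ℝ => u.eval x * w.eval x / (P * Q).eval x * θ x
              - v.eval x * w.eval x / (Q ^ 2).eval x * θ x := by
        funext x
        have hwx : w.eval x = u.eval x * Q.eval x - v.eval x * P.eval x := by
          rw [hwdef]; simp [Polynomial.eval_sub, Polynomial.eval_mul]
        simp only [Polynomial.eval_mul, Polynomial.eval_pow]
        rw [hwx]
        have hPx := (hPpos x).ne'
        have hQx := (hQpos x).ne'
        field_simp
      have hsq : ∫ x : ℝ, (w * w).eval x / (P * Q ^ 2).eval x * θ x = 0 := by
        rw [key3, integral_sub hint1 hint2, A, B, sub_zero]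
      have hnn : 0 ≤ fun x : ℝ => (w * w).eval x / (P * Q ^ 2).eval x * θ x := by
        intro x
        simp only [Polynomial.eval_mul, Pi.zero_apply]
        exact mul_nonneg (div_nonneg (mul_self_nonneg _) (le_of_lt (by
          rw [← Polynomial.eval_mul]; exact hPQ2pos x))) (hθpos x).le
      have hint3 : Integrable (fun x : ℝ => (w * w).eval x / (P * Q ^ 2).eval x * θ x) := by
        refine integrable_ratio n hn θ hθmeas hθpos hθint _ _ hPQ2pos ?_
        have := Polynomial.natDegree_mul_le (p := w) (q := w)
        omega
      have hae := (MeasureTheory.integral_eq_zero_iff_of_nonneg hnn hint3).mp hsq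
      have hw0 : w = 0 := by
        by_contra hw0
        have h0 : volume {x : ℝ | ¬ ((w * w).eval x / (P * Q ^ 2).eval x * θ x = 0)} = 0 := by
          have := hae
          rw [Filter.EventuallyEq, MeasureTheory.ae_iff] at this
          simpa using this
        have hsub : {x : ℝ | w.eval x ≠ 0}
            ⊆ {x : ℝ | ¬ ((w * w).eval x / (P * Q ^ 2).eval x * θ x = 0)} := by
          intro x hx
          simp only [Set.mem_setOf_eq, Polynomial.eval_mul]
          have hpos : 0 < w.eval x * w.eval x / (P * (Q ^ 2) : Polynomial ℝ).eval x * θ x :=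
            mul_pos (div_pos (mul_self_pos.mpr hx) (hPQ2pos x)) (hθpos x)
          rw [Polynomial.eval_mul] at hpos
          exact ne_of_gt hpos
        have h1 : volume {x : ℝ | w.eval x ≠ 0} = 0 := measure_mono_null hsub h0
        have h2 : volume {x : ℝ | w.eval x = 0} = 0 :=
          (Polynomial.finite_setOf_isRoot hw0).measure_zero volume
        have hcover : (Set.univ : Set ℝ) ⊆ {x | w.eval x = 0} ∪ {x | w.eval x ≠ 0} :=
          fun x _ => by by_cases hx : w.eval x = 0; exacts [Or.inl hx, Or.inr hx]
        have := measure_mono_null hcover (measure_union_null h2 h1)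
        rw [Real.volume_univ] at this
        simp at this
      have hPQeq : u * Q = v * P := sub_eq_zero.mp hw0
      have huq : u * q₁ = v * p₁ := by
        apply mul_left_cancel₀ hg0
        calc g * (u * q₁) = u * Q := by rw [hq₁]; ring
          _ = v * P := hPQeq
          _ = g * (v * p₁) := by rw [hp₁]; ring
      have hdvd : p₁ ∣ u := hcop.dvd_of_dvd_mul_right ⟨v, by rw [huq, mul_comm]⟩
      obtain ⟨t, ht⟩ := hdvd
      have hvt : v = t * q₁ := by
        apply mul_left_cancel₀ hp₁0
        calc p₁ * v = u * q₁ := by rw [huq]; ring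
          _ = p₁ * (t * q₁) := by rw [ht]; ring
      have htmem : t ∈ Polynomial.degreeLT ℝ g.natDegree := by
        rw [Polynomial.mem_degreeLT]
        by_cases ht0 : t = 0
        · rw [ht0, Polynomial.degree_zero]; exact WithBot.bot_lt_coe _
        have hu0 : u ≠ 0 := by rw [ht]; exact mul_ne_zero hp₁0 ht0
        have hult : u.natDegree < 2 * n := by
          have := Polynomial.mem_degreeLT.mp hu
          rw [Polynomial.degree_eq_natDegree hu0] at this
          exact_mod_cast this
        have hntu : u.natDegree = p₁.natDegree + t.natDegree := by
          rw [ht, Polynomial.natDegree_mul hp₁0 ht0]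
        rw [Polynomial.degree_eq_natDegree ht0]
        exact_mod_cast (by omega : t.natDegree < g.natDegree)
      refine ⟨⟨t, htmem⟩, ?_⟩
      refine Prod.ext (Subtype.ext ?_) (Subtype.ext ?_)
      · show t * p₁ = u
        rw [ht, mul_comm]
      · show t * q₁ = v
        rw [hvt]
  · haveI : Module.Finite ℝ (Polynomial.degreeLT ℝ g.natDegree) :=
      Module.Finite.equiv (Polynomial.degreeLTEquiv ℝ g.natDegree).symm
    have hinj : Function.Injective Ψ := by
      intro s t hst
      have h1 : (s : Polynomial ℝ) * p₁ = (t : Polynomial ℝ) * p₁ := congrArg (fun z =>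
        ((z.1 : Polynomial.degreeLT ℝ (2 * n)) : Polynomial ℝ)) hst
      exact Subtype.ext (mul_right_cancel₀ hp₁0 h1)
    rw [LinearMap.finrank_range_of_inj hinj,
      (Polynomial.degreeLTEquiv ℝ g.natDegree).finrank_eq, Module.finrank_fin_fun]
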